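/- arXiv:math/0211416 — 2 statements merged into one kernel-verified Lean document; each statement's English description precedes it below -/
import Mathlib

section
/- Let K be a field of characteristic zero and g a finite-dimensional Lie algebra over K. The symmetrization map ω : Sg → Ug defined on monomials by ω(x₁⋯xₙ) = (1/n!) Σ_{σ∈Sₙ} x_{σ(1)}⋯x_{σ(n)} is a K-linear bijection from the symmetric algebra Sg to the universal enveloping algebra Ug. -/
noncomputable section

/-- The commutation relation defining the symmetric algebra as a quotient of the
tensor algebra. -/
def symRel (K : Type*) [Field K] (g : Type*) [LieRing g] [LieAlgebra K g] :
    TensorAlgebra K g → TensorAlgebra K g → Prop :=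
  fun a b => ∃ x y : g, a = TensorAlgebra.ι K x * TensorAlgebra.ι K y ∧
    b = TensorAlgebra.ι K y * TensorAlgebra.ι K x

/-- The symmetric algebra `Sg` on the underlying vector space of `g`. -/
abbrev SgAlg (K : Type*) [Field K] (g : Type*) [LieRing g] [LieAlgebra K g] :=
  RingQuot (symRel K g)

/-- The canonical linear map `g → Sg`. -/
def symIota (K : Type*) [Field K] (g : Type*) [LieRing g] [LieAlgebra K g] :
    g →ₗ[K] SgAlg K g :=
  (RingQuot.mkAlgHom K (symRel K g)).toLinearMap.comp (TensorAlgebra.ι K)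


set_option linter.unusedSectionVars false

noncomputable section

namespace PBW
attribute [local instance] LieRing.ofAssociativeRing

open Finsupp

variable {K : Type*} [Field K] {g : Type*} [LieRing g] [LieAlgebra K g]
variable {ι : Type*} [Fintype ι] [LinearOrder ι]

abbrev P (K : Type*) [Field K] (ι : Type*) : Type _ := Multiset ι →₀ K

def z (μ : Multiset ι) : P K ι := Finsupp.single μ 1

def Pfil (K) [Field K] (ι) [LinearOrder ι] (n : ℕ) : Submodule K (P K ι) :=
  Finsupp.supported K K {μ | Multiset.card μ ≤ n}

def Plt (K) [Field K] (ι) [LinearOrder ι] (n : ℕ) : Submodule K (P K ι) :=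
  Finsupp.supported K K {μ | Multiset.card μ < n}

lemma z_mem_Pfil {μ : Multiset ι} {n : ℕ} (h : Multiset.card μ ≤ n) : z μ ∈ Pfil K ι n :=
  Finsupp.single_mem_supported K 1 h

lemma z_mem_Plt {μ : Multiset ι} {n : ℕ} (h : Multiset.card μ < n) : z μ ∈ Plt K ι n :=
  Finsupp.single_mem_supported K 1 h

lemma Pfil_mono {m n : ℕ} (h : m ≤ n) : Pfil K ι m ≤ Pfil K ι n :=
  Finsupp.supported_mono (fun μ hμ => le_trans hμ h)

lemma Plt_mono {m n : ℕ} (h : m ≤ n) : Plt K ι m ≤ Plt K ι n :=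
  Finsupp.supported_mono (fun μ hμ => lt_of_lt_of_le hμ h)

lemma Plt_le_Pfil (n : ℕ) : Plt K ι n ≤ Pfil K ι n :=
  Finsupp.supported_mono (fun μ (hμ : Multiset.card μ < n) => le_of_lt hμ)

lemma Pfil_le_Plt (n : ℕ) : Pfil K ι n ≤ Plt K ι (n + 1) :=
  Finsupp.supported_mono (fun μ hμ => Nat.lt_succ_of_le hμ)

lemma exists_mem_Pfil (p : P K ι) : p ∈ Pfil K ι (p.support.sup Multiset.card) := by
  rw [Pfil, Finsupp.mem_supported]
  intro μ hμ
  exact Finset.le_sup (f := Multiset.card) hμ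

def mmin (μ : Multiset ι) (h : μ ≠ 0) : ι :=
  μ.toFinset.min' (by rwa [Multiset.toFinset_nonempty])

lemma mmin_mem (μ : Multiset ι) (h : μ ≠ 0) : mmin μ h ∈ μ := by
  have := μ.toFinset.min'_mem (by rwa [Multiset.toFinset_nonempty])
  rwa [Multiset.mem_toFinset] at this

lemma mmin_le {μ : Multiset ι} (h : μ ≠ 0) {x : ι} (hx : x ∈ μ) : mmin μ h ≤ x :=
  Finset.min'_le _ _ (Multiset.mem_toFinset.2 hx)

lemma mmin_eq {μ : Multiset ι} (h : μ ≠ 0) {j : ι} (hj : j ∈ μ) (hle : ∀ x ∈ μ, j ≤ x) :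
    mmin μ h = j :=
  le_antisymm (mmin_le h hj) (hle _ (mmin_mem μ h))

variable (b : Module.Basis ι K g)

def A (b : Module.Basis ι K g) : ℕ → ι → Multiset ι → P K ι
  | 0, i, μ => z (i ::ₘ μ)
  | (n+1), i, μ =>
    if h0 : Multiset.card μ ≤ n then A b n i μ
    else
      have hne : μ ≠ 0 := by
        intro h; rw [h] at h0; simp at h0
      if i ≤ mmin μ hne then z (i ::ₘ μ)
      else
        z (i ::ₘ μ) +
          ((A b n i (μ.erase (mmin μ hne)) - z (i ::ₘ μ.erase (mmin μ hne))).sum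
            fun τ c => c • A b n (mmin μ hne) τ) +
          ∑ k : ι, (b.repr ⁅b i, b (mmin μ hne)⁆) k • A b n k (μ.erase (mmin μ hne))

def act (i : ι) (μ : Multiset ι) : P K ι := A b (Multiset.card μ) i μ

lemma A_succ_low {n : ℕ} {μ : Multiset ι} (h : Multiset.card μ ≤ n) (i : ι) :
    A b (n+1) i μ = A b n i μ := by
  rw [A, dif_pos h]

lemma A_stab : ∀ {n : ℕ} (i : ι) (μ : Multiset ι), Multiset.card μ ≤ n →
    A b n i μ = act b i μ := by
  intro n
  induction n with
  | zero => intro i μ h; rw [act]; rw [Nat.le_zero] at h; rw [h]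
  | succ n ih =>
    intro i μ h
    rcases Nat.lt_or_ge (Multiset.card μ) (n+1) with h'|h'
    · rw [A_succ_low b (Nat.lt_succ_iff.1 h'), ih _ _ (Nat.lt_succ_iff.1 h')]
    · rw [act, le_antisymm h h']

lemma A_succ_high {n : ℕ} {μ : Multiset ι} (h0 : ¬ Multiset.card μ ≤ n)
    (hne : μ ≠ 0) {i : ι} (hle : i ≤ mmin μ hne) : A b (n+1) i μ = z (i ::ₘ μ) := by
  rw [A, dif_neg h0]
  exact if_pos hle

lemma A_succ_main {n : ℕ} {μ : Multiset ι} (h0 : ¬ Multiset.card μ ≤ n)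
    (hne : μ ≠ 0) {i : ι} (hle : ¬ i ≤ mmin μ hne) :
    A b (n+1) i μ =
      z (i ::ₘ μ) +
        ((A b n i (μ.erase (mmin μ hne)) - z (i ::ₘ μ.erase (mmin μ hne))).sum
          fun τ c => c • A b n (mmin μ hne) τ) +
        ∑ k : ι, (b.repr ⁅b i, b (mmin μ hne)⁆) k • A b n k (μ.erase (mmin μ hne)) := by
  rw [A, dif_neg h0]
  exact if_neg hle

lemma act_of_le {i : ι} {μ : Multiset ι} (hle : ∀ x ∈ μ, i ≤ x) :
    act b i μ = z (i ::ₘ μ) := by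
  rcases Nat.eq_zero_or_pos (Multiset.card μ) with h|h
  · rw [act, h]; rfl
  · have hne : μ ≠ 0 := by
      intro hc; rw [hc] at h; simp at h
    obtain ⟨n, hn⟩ : ∃ n, Multiset.card μ = n + 1 :=
      ⟨Multiset.card μ - 1, by omega⟩
    rw [act, hn]
    exact A_succ_high b (by omega) hne (hle _ (mmin_mem μ hne))

end PBW

noncomputable section
namespace PBW
attribute [local instance] LieRing.ofAssociativeRing
set_option linter.unusedSectionVars false

open Finsupp

variable {K : Type*} [Field K] {g : Type*} [LieRing g] [LieAlgebra K g]
variable {ι : Type*} [Fintype ι] [LinearOrder ι]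
variable (b : Module.Basis ι K g)

def rho0 (i : ι) : P K ι →ₗ[K] P K ι := Finsupp.linearCombination K (act b i)

lemma rho0_z (i : ι) (μ : Multiset ι) : rho0 b i (z μ) = act b i μ := by
  simp [rho0, z]

lemma rho0_apply (i : ι) (p : P K ι) : rho0 b i p = p.sum fun τ c => c • act b i τ := by
  simp [rho0, Finsupp.linearCombination_apply]

def rhog : g →ₗ[K] Module.End K (P K ι) := b.constr K (fun i => rho0 b i)

lemma rhog_basis (i : ι) : rhog b (b i) = rho0 b i := b.constr_basis K _ i

lemma rhog_apply (x : g) (p : P K ι) :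
    rhog b x p = ∑ k : ι, b.repr x k • rho0 b k p := by
  rw [rhog, Module.Basis.constr_apply_fintype]
  rw [LinearMap.sum_apply]
  simp [Module.Basis.equivFun_apply]

lemma rhog_z (x : g) (μ : Multiset ι) :
    rhog b x (z μ) = ∑ k : ι, b.repr x k • act b k μ := by
  rw [rhog_apply]; simp [rho0_z]

/-- The fundamental degree bound: `act i μ = z (i ::ₘ μ) + lower order terms`. -/
theorem act_sub_mem : ∀ (n : ℕ) (μ : Multiset ι), Multiset.card μ ≤ n → ∀ i : ι,
    act b i μ - z (i ::ₘ μ) ∈ Pfil K ι (Multiset.card μ) := by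
  intro n
  induction n with
  | zero =>
    intro μ h i
    rw [Nat.le_zero, Multiset.card_eq_zero] at h
    subst h
    have : act b i (0 : Multiset ι) = z (i ::ₘ 0) := act_of_le b (by simp)
    rw [this, sub_self]
    exact Submodule.zero_mem _
  | succ n ih =>
    intro μ h i
    rcases Nat.lt_or_ge (Multiset.card μ) (n+1) with h'|h'
    · exact ih μ (Nat.lt_succ_iff.1 h') i
    have hcard : Multiset.card μ = n + 1 := le_antisymm h h'
    have hne : μ ≠ 0 := by
      intro hc; rw [hc] at hcard; simp at hcard
    by_cases hle : i ≤ mmin μ hne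
    · have : act b i μ = z (i ::ₘ μ) :=
        act_of_le b (fun x hx => le_trans hle (mmin_le hne hx))
      rw [this, sub_self]; exact Submodule.zero_mem _
    · set j := mmin μ hne with hj
      set ν := μ.erase j with hν
      have hjmem : j ∈ μ := mmin_mem μ hne
      have hcardν : Multiset.card ν = n := by
        rw [hν, Multiset.card_erase_of_mem hjmem, hcard]; rfl
      have hA : act b i μ = A b (n+1) i μ := by rw [act, hcard]
      rw [hA, A_succ_main b (by omega) hne hle]
      have hstab : A b n i ν = act b i ν := A_stab b i ν (le_of_eq hcardν)
      have hq : A b n i ν - z (i ::ₘ ν) ∈ Pfil K ι n := by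
        rw [hstab]
        have := ih ν (le_of_eq hcardν) i
        rwa [hcardν] at this
      have hact : ∀ (k : ι) (τ : Multiset ι), Multiset.card τ ≤ n →
          act b k τ ∈ Pfil K ι (n + 1) := by
        intro k τ hτ
        have h1 := ih τ hτ k
        have h2 : z (k ::ₘ τ) ∈ Pfil K ι (n+1) :=
          z_mem_Pfil (by rw [Multiset.card_cons]; omega)
        have : act b k τ = (act b k τ - z (k ::ₘ τ)) + z (k ::ₘ τ) := by abel
        rw [this]
        exact Submodule.add_mem _ (Pfil_mono (by omega) h1) h2
      rw [hcard]
      have hsum1 : ((A b n i ν - z (i ::ₘ ν)).sum fun τ c => c • A b n (mmin μ hne) τ)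
          ∈ Pfil K ι (n+1) := by
        apply Submodule.sum_mem
        intro τ hτ
        dsimp only
        have hτc : Multiset.card τ ≤ n := by
          have := (Finsupp.mem_supported K _).1 hq hτ
          exact this
        rw [A_stab b _ τ hτc]
        exact Submodule.smul_mem _ _ (hact _ τ hτc)
      have hsum2 : (∑ k : ι, (b.repr ⁅b i, b (mmin μ hne)⁆) k • A b n k ν)
          ∈ Pfil K ι (n+1) := by
        apply Submodule.sum_mem
        intro k _
        rw [A_stab b _ ν (le_of_eq hcardν)]
        exact Submodule.smul_mem _ _ (by rw [← hcardν] at hact ⊢; exact hact k ν le_rfl)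
      have : z (i ::ₘ μ) +
            ((A b n i ν - z (i ::ₘ ν)).sum fun τ c => c • A b n (mmin μ hne) τ) +
            (∑ k : ι, (b.repr ⁅b i, b (mmin μ hne)⁆) k • A b n k ν) - z (i ::ₘ μ)
          = ((A b n i ν - z (i ::ₘ ν)).sum fun τ c => c • A b n (mmin μ hne) τ) +
            (∑ k : ι, (b.repr ⁅b i, b (mmin μ hne)⁆) k • A b n k ν) := by abel
      rw [this]
      exact Submodule.add_mem _ hsum1 hsum2

lemma act_sub_mem' (i : ι) (μ : Multiset ι) :
    act b i μ - z (i ::ₘ μ) ∈ Pfil K ι (Multiset.card μ) :=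
  act_sub_mem b (Multiset.card μ) μ le_rfl i

lemma act_mem_Pfil (i : ι) (μ : Multiset ι) :
    act b i μ ∈ Pfil K ι (Multiset.card μ + 1) := by
  have h1 := act_sub_mem' b i μ
  have h2 : z (i ::ₘ μ) ∈ Pfil K ι (Multiset.card μ + 1) :=
    z_mem_Pfil (by rw [Multiset.card_cons])
  have : act b i μ = (act b i μ - z (i ::ₘ μ)) + z (i ::ₘ μ) := by abel
  rw [this]
  exact Submodule.add_mem _ (Pfil_mono (by omega) h1) h2

lemma rho0_Pfil {n : ℕ} (i : ι) {p : P K ι} (hp : p ∈ Pfil K ι n) :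
    rho0 b i p ∈ Pfil K ι (n+1) := by
  rw [rho0_apply]
  apply Submodule.sum_mem
  intro τ hτ
  have hτc : Multiset.card τ ≤ n := (Finsupp.mem_supported K _).1 hp hτ
  exact Submodule.smul_mem _ _ (Pfil_mono (by omega) (act_mem_Pfil b i τ))

lemma rho0_Plt {n : ℕ} (i : ι) {p : P K ι} (hp : p ∈ Plt K ι n) :
    rho0 b i p ∈ Plt K ι (n+1) := by
  rw [rho0_apply]
  apply Submodule.sum_mem
  intro τ hτ
  have hτc : Multiset.card τ < n := (Finsupp.mem_supported K _).1 hp hτ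
  refine Submodule.smul_mem _ _ ?_
  have := act_mem_Pfil b i τ
  exact Plt_mono (by omega) (Pfil_le_Plt _ this)

lemma rhog_Pfil {n : ℕ} (x : g) {p : P K ι} (hp : p ∈ Pfil K ι n) :
    rhog b x p ∈ Pfil K ι (n+1) := by
  rw [rhog_apply]
  exact Submodule.sum_mem _ fun k _ => Submodule.smul_mem _ _ (rho0_Pfil b k hp)

lemma rhog_Plt {n : ℕ} (x : g) {p : P K ι} (hp : p ∈ Plt K ι n) :
    rhog b x p ∈ Plt K ι (n+1) := by
  rw [rhog_apply]
  exact Submodule.sum_mem _ fun k _ => Submodule.smul_mem _ _ (rho0_Plt b k hp)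

/-- Clean unfolding of the recursive definition in terms of `act`, `rho0`, `rhog`. -/
lemma act_unfold (i : ι) (μ : Multiset ι) (hne : μ ≠ 0) (hle : ¬ i ≤ mmin μ hne) :
    act b i μ = z (i ::ₘ μ) +
      rho0 b (mmin μ hne) (act b i (μ.erase (mmin μ hne)) - z (i ::ₘ μ.erase (mmin μ hne))) +
      rhog b ⁅b i, b (mmin μ hne)⁆ (z (μ.erase (mmin μ hne))) := by
  set j := mmin μ hne with hj
  set ν := μ.erase j with hν
  have hjmem : j ∈ μ := mmin_mem μ hne
  obtain ⟨n, hcard⟩ : ∃ n, Multiset.card μ = n + 1 := by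
    refine ⟨Multiset.card μ - 1, ?_⟩
    have : 0 < Multiset.card μ := Multiset.card_pos.2 hne
    omega
  have hcardν : Multiset.card ν = n := by
    rw [hν, Multiset.card_erase_of_mem hjmem, hcard]; rfl
  have hA : act b i μ = A b (n+1) i μ := by rw [act, hcard]
  rw [hA, A_succ_main b (by omega) hne hle]
  have hstab : A b n i ν = act b i ν := A_stab b i ν (le_of_eq hcardν)
  congr 1
  · congr 1
    rw [hstab]
    have hq : act b i ν - z (i ::ₘ ν) ∈ Pfil K ι n := by
      have := act_sub_mem' b i ν; rwa [hcardν] at this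
    rw [rho0_apply]
    apply Finsupp.sum_congr
    intro τ hτ
    have hτc : Multiset.card τ ≤ n := (Finsupp.mem_supported K _).1 hq hτ
    rw [A_stab b _ τ hτc]
  · rw [rhog_z]
    apply Finset.sum_congr rfl
    intro k _
    rw [A_stab b _ ν (le_of_eq hcardν)]

/-- The key commutation identity when `j` is below everything in `μ`. -/
lemma C1 (i j : ι) (μ : Multiset ι) (hjμ : ∀ x ∈ μ, j ≤ x) :
    act b i (j ::ₘ μ) = rho0 b j (act b i μ) + rhog b ⁅b i, b j⁆ (z μ) := by
  have hne : (j ::ₘ μ) ≠ 0 := by simp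
  have hjall : ∀ x ∈ j ::ₘ μ, j ≤ x := by
    intro x hx
    rcases Multiset.mem_cons.1 hx with h|h
    · exact le_of_eq h.symm
    · exact hjμ x h
  have hmin : mmin (j ::ₘ μ) hne = j := mmin_eq hne (Multiset.mem_cons_self j μ) hjall
  rcases lt_trichotomy j i with hji | hji | hji
  · -- j < i : unfold the definition
    have hle : ¬ i ≤ mmin (j ::ₘ μ) hne := by rw [hmin]; exact not_le.2 hji
    have key := act_unfold b i (j ::ₘ μ) hne hle
    rw [hmin, Multiset.erase_cons_head] at key
    rw [key]
    have hz : z (i ::ₘ j ::ₘ μ) = rho0 b j (z (i ::ₘ μ)) := by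
      rw [rho0_z, act_of_le b, Multiset.cons_swap]
      intro x hx
      rcases Multiset.mem_cons.1 hx with h|h
      · exact le_of_lt (h ▸ hji)
      · exact hjμ x h
    rw [hz, map_sub]
    abel
  · -- i = j
    subst hji
    have hiall : ∀ x ∈ j ::ₘ μ, j ≤ x := hjall
    have h1 : act b j (j ::ₘ μ) = z (j ::ₘ j ::ₘ μ) := by
      apply act_of_le; exact hiall
    have h2 : act b j μ = z (j ::ₘ μ) := act_of_le b hjμ
    rw [h1, h2, rho0_z, lie_self, map_zero, LinearMap.zero_apply, add_zero]
    exact (act_of_le b hiall).symm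
  · -- i < j
    have h1 : act b i (j ::ₘ μ) = z (i ::ₘ j ::ₘ μ) := by
      apply act_of_le
      intro x hx
      exact le_trans (le_of_lt hji) (hjall x hx)
    have h2 : act b i μ = z (i ::ₘ μ) :=
      act_of_le b (fun x hx => le_trans (le_of_lt hji) (hjμ x hx))
    rw [h1, h2, rho0_z]
    have hne' : (i ::ₘ μ) ≠ 0 := by simp
    have hiall' : ∀ x ∈ i ::ₘ μ, i ≤ x := by
      intro x hx
      rcases Multiset.mem_cons.1 hx with h|h
      · exact le_of_eq h.symm
      · exact le_trans (le_of_lt hji) (hjμ x h)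
    have hmin' : mmin (i ::ₘ μ) hne' = i :=
      mmin_eq hne' (Multiset.mem_cons_self i μ) hiall'
    have hle' : ¬ j ≤ mmin (i ::ₘ μ) hne' := by rw [hmin']; exact not_le.2 hji
    have h3 := act_unfold b j (i ::ₘ μ) hne' hle'
    rw [hmin', Multiset.erase_cons_head] at h3
    have h4 : act b j μ = z (j ::ₘ μ) := act_of_le b hjμ
    rw [h4, sub_self, map_zero, add_zero] at h3
    rw [h3]
    have hsk : (⁅b i, b j⁆ : g) = -⁅b j, b i⁆ := (lie_skew _ _).symm
    rw [hsk, map_neg, LinearMap.neg_apply, Multiset.cons_swap]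
    abel

end PBW
noncomputable section
namespace PBW
attribute [local instance] LieRing.ofAssociativeRing
set_option linter.unusedSectionVars false
set_option maxHeartbeats 1000000

open Finsupp

variable {K : Type*} [Field K] {g : Type*} [LieRing g] [LieAlgebra K g]
variable {ι : Type*} [Fintype ι] [LinearOrder ι]
variable (b : Module.Basis ι K g)

/-- The commutation property for the pair `(x, y)` at the vector `p`. -/
def CmP (x y : g) (p : P K ι) : Prop :=
  rhog b x (rhog b y p) - rhog b y (rhog b x p) = rhog b ⁅x, y⁆ p

lemma CmP_zero (x y : g) : CmP b x y 0 := by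
  simp [CmP]

lemma CmP_add {x y : g} {p q : P K ι} (hp : CmP b x y p) (hq : CmP b x y q) :
    CmP b x y (p + q) := by
  unfold CmP at *
  simp only [map_add]
  rw [← hp, ← hq]; abel

lemma CmP_smul {x y : g} {p : P K ι} (c : K) (hp : CmP b x y p) :
    CmP b x y (c • p) := by
  unfold CmP at *
  simp only [map_smul, ← smul_sub, hp]

lemma CmP_swap {x y : g} {p : P K ι} (hp : CmP b x y p) : CmP b y x p := by
  unfold CmP at *
  rw [← lie_skew, map_neg, LinearMap.neg_apply, ← hp]; abel

lemma CmP_ext {p : P K ι} (h : ∀ i j : ι, CmP b (b i) (b j) p) (x y : g) :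
    CmP b x y p := by
  let B : g →ₗ[K] g →ₗ[K] P K ι := LinearMap.mk₂ K
    (fun x y => rhog b x (rhog b y p) - rhog b y (rhog b x p) - rhog b ⁅x, y⁆ p)
    (by intro m₁ m₂ y; simp only [map_add, LinearMap.add_apply, add_lie]; abel)
    (by intro c m y; simp only [map_smul, LinearMap.smul_apply, smul_lie, smul_sub])
    (by intro x m₁ m₂; simp only [map_add, LinearMap.add_apply, lie_add]; abel)
    (by intro c x m; simp only [map_smul, LinearMap.smul_apply, lie_smul, smul_sub])
  have hB : B = 0 := by
    apply b.ext; intro i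
    apply b.ext; intro j
    have := h i j
    unfold CmP at this
    simp only [B, LinearMap.mk₂_apply, LinearMap.zero_apply]
    rw [this]; abel
  have hxy : B x y = 0 := by rw [hB]; rfl
  unfold CmP
  have : rhog b x (rhog b y p) - rhog b y (rhog b x p) - rhog b ⁅x, y⁆ p = 0 := hxy
  have h' := sub_eq_zero.1 this
  exact h'

/-- Case where `j` is minimal: follows directly from the recursive definition. -/
lemma CmP_eq {x y : g} {p : P K ι} (h : CmP b x y p) :
    rhog b x (rhog b y p) = rhog b y (rhog b x p) + rhog b ⁅x, y⁆ p := by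
  rw [← h]; abel

lemma Cm_low (i j : ι) (μ : Multiset ι) (hj : ∀ x ∈ μ, j ≤ x) :
    CmP b (b i) (b j) (z μ) := by
  unfold CmP
  rw [rhog_basis b i, rhog_basis b j, rho0_z b j μ, act_of_le b hj,
    rho0_z b i (j ::ₘ μ), C1 b i j μ hj, rho0_z b i μ]
  abel

/-- The hard case of the main induction. -/
lemma Cm_hard (n : ℕ)
    (IH : ∀ p ∈ Pfil K ι n, ∀ x y : g, CmP b x y p)
    (μ : Multiset ι) (hcard : Multiset.card μ = n + 1) (hne : μ ≠ 0)
    (i j : ι) (hik : mmin μ hne < i) (hjk : mmin μ hne < j) :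
    CmP b (b i) (b j) (z μ) := by
  set k := mmin μ hne with hk
  set ν := μ.erase k with hν
  have hkmem : k ∈ μ := mmin_mem μ hne
  have hkν : ∀ x ∈ ν, k ≤ x := fun x hx => mmin_le hne (Multiset.mem_of_mem_erase hx)
  have hcardν : Multiset.card ν = n := by
    rw [hν, Multiset.card_erase_of_mem hkmem, hcard]; rfl
  have hzν : z ν ∈ Pfil K ι n := z_mem_Pfil (le_of_eq hcardν)
  have F0 : rhog b (b k) (z ν) = z μ := by
    rw [rhog_basis, rho0_z, act_of_le b hkν, Multiset.cons_erase hkmem]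
  -- commutation of (b a, b k) on rhog b (b c) (z ν), for k ≤ c
  have F2 : ∀ a c : ι, k ≤ c → CmP b (b a) (b k) (rhog b (b c) (z ν)) := by
    intro a c hc
    have hQ : rhog b (b c) (z ν) = z (c ::ₘ ν) + (act b c ν - z (c ::ₘ ν)) := by
      rw [rhog_basis, rho0_z]; abel
    rw [hQ]
    apply CmP_add
    · apply Cm_low
      intro x hx
      rcases Multiset.mem_cons.1 hx with h|h
      · exact h ▸ hc
      · exact hkν x h
    · apply IH
      · have := act_sub_mem' b c ν; rwa [hcardν] at this
  -- abbreviations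
  have e1 : rhog b (b j) (z μ) =
      rhog b (b k) (rhog b (b j) (z ν)) + rhog b ⁅b j, b k⁆ (z ν) := by
    rw [← F0]
    exact CmP_eq b (Cm_low b j k ν hkν)
  have e2 : rhog b (b i) (z μ) =
      rhog b (b k) (rhog b (b i) (z ν)) + rhog b ⁅b i, b k⁆ (z ν) := by
    rw [← F0]
    exact CmP_eq b (Cm_low b i k ν hkν)
  have e3 : rhog b (b i) (rhog b (b k) (rhog b (b j) (z ν))) =
      rhog b (b k) (rhog b (b i) (rhog b (b j) (z ν))) +
        rhog b ⁅b i, b k⁆ (rhog b (b j) (z ν)) :=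
    CmP_eq b (F2 i j (le_of_lt hjk))
  have e4 : rhog b (b j) (rhog b (b k) (rhog b (b i) (z ν))) =
      rhog b (b k) (rhog b (b j) (rhog b (b i) (z ν))) +
        rhog b ⁅b j, b k⁆ (rhog b (b i) (z ν)) :=
    CmP_eq b (F2 j i (le_of_lt hik))
  have e5 : rhog b (b i) (rhog b (b j) (z ν)) =
      rhog b (b j) (rhog b (b i) (z ν)) + rhog b ⁅b i, b j⁆ (z ν) :=
    CmP_eq b (IH _ hzν _ _)
  have e6 : rhog b ⁅b i, b k⁆ (rhog b (b j) (z ν)) =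
      rhog b (b j) (rhog b ⁅b i, b k⁆ (z ν)) + rhog b ⁅⁅b i, b k⁆, b j⁆ (z ν) :=
    CmP_eq b (IH _ hzν _ _)
  have e7 : rhog b (b i) (rhog b ⁅b j, b k⁆ (z ν)) =
      rhog b ⁅b j, b k⁆ (rhog b (b i) (z ν)) + rhog b ⁅b i, ⁅b j, b k⁆⁆ (z ν) :=
    CmP_eq b (IH _ hzν _ _)
  have e8 : rhog b (b k) (rhog b ⁅b i, b j⁆ (z ν)) =
      rhog b ⁅b i, b j⁆ (z μ) - rhog b ⁅⁅b i, b j⁆, b k⁆ (z ν) := by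
    have h := IH _ hzν ⁅b i, b j⁆ (b k)
    unfold CmP at h
    rw [F0] at h
    rw [← h]; abel
  have hJ : (⁅⁅b i, b j⁆, b k⁆ : g) = ⁅⁅b i, b k⁆, b j⁆ + ⁅b i, ⁅b j, b k⁆⁆ := by
    rw [lie_lie, ← lie_skew (b j) ⁅b i, b k⁆, lie_lie]
    abel
  unfold CmP
  rw [e1, e2]
  simp only [map_add]
  rw [e3, e4, e5]
  simp only [map_add]
  rw [e6, e7, e8, hJ, map_add]
  simp only [LinearMap.add_apply]
  abel

theorem Cmain : ∀ n : ℕ, ∀ p ∈ Pfil K ι n, ∀ x y : g, CmP b x y p := by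
  intro n
  induction n with
  | zero =>
    intro p hp
    rw [Pfil, Finsupp.supported_eq_span_single] at hp
    refine Submodule.span_induction ?_ ?_ ?_ ?_ hp
    · rintro q ⟨μ, hμ, rfl⟩
      have hμ0 : μ = 0 := by
        simp only [Set.mem_setOf_eq, Nat.le_zero, Multiset.card_eq_zero] at hμ
        exact hμ
      subst hμ0
      intro x y
      exact CmP_ext b (fun i j => Cm_low b i j 0 (by simp)) x y
    · intro x y; exact CmP_zero b x y
    · intro p q _ _ hp hq x y; exact CmP_add b (hp x y) (hq x y)
    · intro c p _ hp x y; exact CmP_smul b c (hp x y)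
  | succ n ih =>
    intro p hp
    rw [Pfil, Finsupp.supported_eq_span_single] at hp
    refine Submodule.span_induction ?_ ?_ ?_ ?_ hp
    · rintro q ⟨μ, hμ, rfl⟩
      simp only [Set.mem_setOf_eq] at hμ
      intro x y
      refine CmP_ext b (fun i j => ?_) x y
      rcases Nat.lt_or_ge (Multiset.card μ) (n+1) with h0|h0
      · exact ih _ (z_mem_Pfil (Nat.lt_succ_iff.1 h0)) _ _
      have hcard : Multiset.card μ = n + 1 := le_antisymm hμ h0
      have hne : μ ≠ 0 := by
        intro hc; rw [hc] at hcard; simp at hcard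
      by_cases hj : ∀ x ∈ μ, j ≤ x
      · exact Cm_low b i j μ hj
      by_cases hi : ∀ x ∈ μ, i ≤ x
      · exact CmP_swap b (Cm_low b j i μ hi)
      push_neg at hi hj
      obtain ⟨xj, hxjm, hxj⟩ := hj
      obtain ⟨xi, hxim, hxi⟩ := hi
      exact Cm_hard b n (fun p hp x y => ih p hp x y) μ hcard hne i j
        (lt_of_le_of_lt (mmin_le hne hxim) hxi)
        (lt_of_le_of_lt (mmin_le hne hxjm) hxj)
    · intro x y; exact CmP_zero b x y
    · intro p q _ _ hp hq x y; exact CmP_add b (hp x y) (hq x y)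
    · intro c p _ hp x y; exact CmP_smul b c (hp x y)

/-- The representation of `g` on `P K ι` as a morphism of Lie algebras. -/
def rhoLie : g →ₗ⁅K⁆ Module.End K (P K ι) :=
  { rhog b with
    map_lie' := by
      intro x y
      refine LinearMap.ext fun p => ?_
      have h := Cmain b (p.support.sup Multiset.card) p (exists_mem_Pfil p) x y
      unfold CmP at h
      show rhog b ⁅x, y⁆ p = (rhog b x * rhog b y - rhog b y * rhog b x) p
      simp only [LinearMap.sub_apply, Module.End.mul_apply]
      exact h.symm }

lemma rhoLie_apply (x : g) (p : P K ι) : rhoLie b x p = rhog b x p := rfl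

end PBW
noncomputable section
namespace PBW
attribute [local instance] LieRing.ofAssociativeRing
set_option linter.unusedSectionVars false
set_option maxHeartbeats 1000000

open Finsupp

variable {K : Type*} [Field K] {g : Type*} [LieRing g] [LieAlgebra K g]
variable {ι : Type*} [Fintype ι] [LinearOrder ι]
variable (b : Module.Basis ι K g)

local notation "Ug" => UniversalEnvelopingAlgebra K g
local notation "ιU" => UniversalEnvelopingAlgebra.ι K

/-- The algebra representation of `Ug` on `P K ι`. -/
def rhoA : Ug →ₐ[K] Module.End K (P K ι) :=
  UniversalEnvelopingAlgebra.lift K (rhoLie b)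

lemma rhoA_ι (x : g) : rhoA b (ιU x) = rhog b x :=
  UniversalEnvelopingAlgebra.lift_ι_apply K (rhoLie b) x

/-- Evaluation at the vacuum vector `z 0`. -/
def ev : Ug →ₗ[K] P K ι where
  toFun u := rhoA b u (z 0)
  map_add' u v := by simp [map_add]
  map_smul' c u := by simp [map_smul]

lemma ev_apply (u : Ug) : ev b u = rhoA b u (z 0) := rfl

/-- The monomial word in `Ug` associated to a list of basis indices. -/
def W (l : List ι) : Ug := (l.map (fun i => ιU (b i))).prod

@[simp] lemma W_nil : W b ([] : List ι) = 1 := rfl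

lemma W_cons (i : ι) (l : List ι) : W b (i :: l) = ιU (b i) * W b l := by
  simp [W]

lemma W_append (l l' : List ι) : W b (l ++ l') = W b l * W b l' := by
  simp [W]

lemma ev_W_sub_mem : ∀ l : List ι, ev b (W b l) - z (↑l) ∈ Plt K ι l.length := by
  intro l
  induction l with
  | nil =>
    have h : ev b (W b ([] : List ι)) = z (0 : Multiset ι) := by
      rw [ev_apply, W_nil, map_one, Module.End.one_apply]
    rw [h]
    simp only [Multiset.coe_nil, sub_self]
    exact Submodule.zero_mem _
  | cons i t ih =>
    have h : ev b (W b (i :: t)) = rhog b (b i) (ev b (W b t)) := by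
      rw [ev_apply, W_cons, map_mul, Module.End.mul_apply, rhoA_ι, ev_apply]
    have hsplit : ev b (W b (i :: t)) - z (↑(i :: t)) =
        rhog b (b i) (ev b (W b t) - z ↑t) + (act b i ↑t - z (i ::ₘ ↑t)) := by
      rw [h, map_sub]
      have : rhog b (b i) (z ↑t) = act b i ↑t := by rw [rhog_basis, rho0_z]
      rw [this]
      have : (↑(i :: t) : Multiset ι) = i ::ₘ ↑t := rfl
      rw [this]
      abel
    rw [hsplit]
    apply Submodule.add_mem
    · exact Plt_mono (by simp) (rhog_Plt b _ ih)
    · have h2 := act_sub_mem' b i (↑t : Multiset ι)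
      have h3 : Multiset.card (↑t : Multiset ι) = t.length := by simp
      apply Plt_mono (le_refl (t.length + 1))
      apply Pfil_le_Plt
      rw [← h3]
      simpa [List.length_cons] using h2
end PBW
noncomputable section
namespace PBW
attribute [local instance] LieRing.ofAssociativeRing
set_option linter.unusedSectionVars false
set_option maxHeartbeats 1000000

open Finsupp

variable {K : Type*} [Field K] {g : Type*} [LieRing g] [LieAlgebra K g]
variable {ι : Type*} [Fintype ι] [LinearOrder ι]
variable (b : Module.Basis ι K g)

local notation "Ug" => UniversalEnvelopingAlgebra K g
local notation "ιU" => UniversalEnvelopingAlgebra.ι K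

lemma iotaU_expand (x : g) : ιU x = ∑ k : ι, b.repr x k • ιU (b k) := by
  calc ιU x = (UniversalEnvelopingAlgebra.ι K : g →ₗ⁅K⁆ Ug).toLinearMap x := rfl
    _ = (UniversalEnvelopingAlgebra.ι K : g →ₗ⁅K⁆ Ug).toLinearMap
          (∑ k : ι, b.repr x k • b k) := by rw [b.sum_repr]
    _ = ∑ k : ι, b.repr x k • (UniversalEnvelopingAlgebra.ι K : g →ₗ⁅K⁆ Ug).toLinearMap (b k) := by
          rw [map_sum]; simp only [map_smul]
    _ = ∑ k : ι, b.repr x k • ιU (b k) := rfl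

lemma iotaU_comm (x y : g) : ιU x * ιU y - ιU y * ιU x = ιU ⁅x, y⁆ := by
  rw [LieHom.map_lie, Ring.lie_def]

/-- Filtration of `Ug` by spans of words of bounded length. -/
def Fspan (n : ℕ) : Submodule K Ug :=
  Submodule.span K {u : Ug | ∃ l : List ι, l.length ≤ n ∧ u = W b l}

lemma W_mem_Fspan {l : List ι} {n : ℕ} (h : l.length ≤ n) : W b l ∈ Fspan b n :=
  Submodule.subset_span ⟨l, h, rfl⟩

lemma Fspan_mono {m n : ℕ} (h : m ≤ n) : Fspan b m ≤ Fspan b n :=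
  Submodule.span_mono (fun u ⟨l, hl, hu⟩ => ⟨l, le_trans hl h, hu⟩)

lemma mul_Fspan {n : ℕ} (i : ι) {u : Ug} (hu : u ∈ Fspan b n) :
    ιU (b i) * u ∈ Fspan b (n + 1) := by
  induction hu using Submodule.span_induction with
  | mem u hu =>
    obtain ⟨l, hl, rfl⟩ := hu
    rw [← W_cons]
    exact W_mem_Fspan b (by simpa using Nat.succ_le_succ hl)
  | zero => rw [mul_zero]; exact Submodule.zero_mem _
  | add u v _ _ hu hv => rw [mul_add]; exact Submodule.add_mem _ hu hv
  | smul c u _ hu => rw [mul_smul_comm]; exact Submodule.smul_mem _ _ hu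

/-- Straightening: permuting a word changes it by lower-order terms. -/
lemma W_perm : ∀ {l l' : List ι}, l.Perm l' → ∀ n : ℕ, l.length = n + 1 →
    W b l - W b l' ∈ Fspan b n := by
  intro l l' h
  induction h with
  | nil => intro n hn; simp at hn
  | cons x h ih =>
    intro n hn
    rename_i t t'
    rw [W_cons, W_cons, ← mul_sub]
    have hn' : t.length = n := by simpa using hn
    rcases Nat.eq_zero_or_pos t.length with h0|h0
    · have h0' : t'.length = 0 := by rw [← h.length_eq, h0]
      rw [List.length_eq_zero_iff.1 h0, List.length_eq_zero_iff.1 h0', sub_self, mul_zero]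
      exact Submodule.zero_mem _
    · obtain ⟨m, hm⟩ : ∃ m, t.length = m + 1 := ⟨t.length - 1, by omega⟩
      have := mul_Fspan b x (ih m hm)
      rw [← hn', hm]
      exact this
  | swap x y t =>
    intro n hn
    simp only [List.length_cons] at hn
    have hn' : n = t.length + 1 := by omega
    have key : W b (y :: x :: t) - W b (x :: y :: t) = ιU ⁅b y, b x⁆ * W b t := by
      rw [W_cons, W_cons, W_cons, W_cons, ← mul_assoc, ← mul_assoc, ← sub_mul,
        iotaU_comm]
    rw [key, iotaU_expand b ⁅b y, b x⁆, Finset.sum_mul]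
    apply Submodule.sum_mem
    intro k _
    rw [smul_mul_assoc]
    apply Submodule.smul_mem
    rw [← W_cons]
    exact W_mem_Fspan b (by simp [hn'])
  | trans h1 h2 ih1 ih2 =>
    intro n hn
    have h3 := Submodule.add_mem _ (ih1 n hn) (ih2 n (by rw [← h1.length_eq]; exact hn))
    rwa [sub_add_sub_cancel] at h3

/-- All words span `Ug`. -/
lemma span_W_top : Submodule.span K {u : Ug | ∃ l : List ι, u = W b l} = ⊤ := by
  set V := Submodule.span K {u : Ug | ∃ l : List ι, u = W b l} with hV
  have hmul : ∀ u v : Ug, u ∈ V → v ∈ V → u * v ∈ V := by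
    intro u v hu hv
    have h1 : V * V ≤ V := by
      rw [hV, Submodule.span_mul_span]
      apply Submodule.span_le.2
      rintro _ ⟨u', ⟨l, rfl⟩, v', ⟨l', rfl⟩, rfl⟩
      exact Submodule.subset_span ⟨l ++ l', (W_append b l l').symm⟩
    exact h1 (Submodule.mul_mem_mul hu hv)
  rw [eq_top_iff]
  intro u _
  obtain ⟨t, rfl⟩ : ∃ t, UniversalEnvelopingAlgebra.mkAlgHom K g t = u :=
    RingCon.mkₐ_surjective _ u
  induction t using TensorAlgebra.induction with
  | algebraMap r =>
    rw [AlgHom.commutes]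
    rw [Algebra.algebraMap_eq_smul_one]
    exact Submodule.smul_mem _ _ (Submodule.subset_span ⟨[], rfl⟩)
  | ι x =>
    have hx : UniversalEnvelopingAlgebra.mkAlgHom K g (TensorAlgebra.ι K x) = ιU x := rfl
    rw [hx, iotaU_expand b x]
    apply Submodule.sum_mem
    intro k _
    apply Submodule.smul_mem
    have : ιU (b k) = W b [k] := by simp [W_cons]
    rw [this]
    exact Submodule.subset_span ⟨[k], rfl⟩
  | mul a c ha hc => rw [map_mul]; exact hmul _ _ (ha trivial) (hc trivial)
  | add a c ha hc => rw [map_add]; exact Submodule.add_mem _ (ha trivial) (hc trivial)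

end PBW
noncomputable section
namespace PBW
attribute [local instance] LieRing.ofAssociativeRing
set_option linter.unusedSectionVars false
set_option maxHeartbeats 1000000

open Finsupp

variable {K : Type*} [Field K] {g : Type*} [LieRing g] [LieAlgebra K g]
variable {ι : Type*} [Fintype ι] [LinearOrder ι]
variable (b : Module.Basis ι K g)

local notation "Ug" => UniversalEnvelopingAlgebra K g
local notation "ιU" => UniversalEnvelopingAlgebra.ι K

/-- The product word multilinear map. -/
def wordU (n : ℕ) :
    MultilinearMap K (fun _ : Fin n => g) Ug :=
  (MultilinearMap.mkPiAlgebraFin K n Ug).compLinearMap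
    (fun _ => (UniversalEnvelopingAlgebra.ι K : g →ₗ⁅K⁆ Ug).toLinearMap)

lemma wordU_apply (n : ℕ) (x : Fin n → g) :
    wordU (K := K) (g := g) n x = (List.ofFn fun i => ιU (x i)).prod := by
  simp [wordU]

/-- The symmetrization multilinear map. -/
def symU (n : ℕ) :
    MultilinearMap K (fun _ : Fin n => g) Ug :=
  (n.factorial : K)⁻¹ • ∑ σ : Equiv.Perm (Fin n), (wordU (K := K) (g := g) n).domDomCongr σ

lemma symU_apply (n : ℕ) (x : Fin n → g) :
    symU (K := K) (g := g) n x = (n.factorial : K)⁻¹ •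
      ∑ σ : Equiv.Perm (Fin n), (List.ofFn fun i => ιU (x (σ i))).prod := by
  simp [symU, MultilinearMap.sum_apply, MultilinearMap.domDomCongr_apply, wordU_apply]

lemma symU_perm (n : ℕ) (x : Fin n → g) (τ : Equiv.Perm (Fin n)) :
    symU (K := K) (g := g) n (fun i => x (τ i)) = symU (K := K) (g := g) n x := by
  rw [symU_apply, symU_apply]
  congr 1
  exact Fintype.sum_equiv (Equiv.mulLeft τ) _ _ (fun σ => rfl)

lemma symU_expand (n : ℕ) (x : Fin n → g) :
    symU (K := K) (g := g) n x = ∑ f : Fin n → ι,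
      (∏ i, b.repr (x i) (f i)) • symU (K := K) (g := g) n (fun i => b (f i)) := by
  have hx : x = fun i => ∑ k : ι, b.repr (x i) k • b k := by
    funext i; rw [b.sum_repr]
  conv_lhs => rw [hx]
  rw [MultilinearMap.map_sum]
  apply Finset.sum_congr rfl
  intro f _
  rw [MultilinearMap.map_smul_univ]

def SymList (l : List ι) : Ug := symU (K := K) (g := g) l.length (fun i => b (l.get i))

lemma symU_cast {n m : ℕ} (h : n = m) (x : Fin m → g) :
    symU (K := K) (g := g) m x = symU (K := K) (g := g) n (fun i => x (Fin.cast h i)) := by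
  subst h; rfl

lemma symU_to_symList (n : ℕ) (w : Fin n → ι) :
    symU (K := K) (g := g) n (fun i => b (w i)) = SymList b (List.ofFn w) := by
  rw [SymList, symU_cast (List.length_ofFn (f := w)).symm]
  congr 1
  funext i
  congr 1
  simp [List.get_ofFn]

lemma mult_ofFn_perm {α : Type*} {n : ℕ} (v : Fin n → α) (τ : Equiv.Perm (Fin n)) :
    (↑(List.ofFn (fun i => v (τ i))) : Multiset α) = ↑(List.ofFn v) := by
  rw [List.ofFn_eq_map, List.ofFn_eq_map]
  have h1 : ∀ (w : Fin n → α), (↑((List.finRange n).map w) : Multiset α)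
      = Multiset.map w (↑(List.finRange n)) := fun w => rfl
  rw [h1, h1]
  have h2 : (↑(List.finRange n) : Multiset (Fin n)) = (Finset.univ : Finset (Fin n)).val := rfl
  have h3 : Multiset.map (fun i => v (τ i)) (↑(List.finRange n) : Multiset (Fin n))
      = Multiset.map v (Multiset.map τ (↑(List.finRange n) : Multiset (Fin n))) := by
    rw [Multiset.map_map]; rfl
  rw [h3, h2]
  congr 1
  have h4 : Multiset.map (⇑τ) (Finset.univ : Finset (Fin n)).val
      = ((Finset.univ : Finset (Fin n)).map τ.toEmbedding).val := by
    rw [Finset.map_val]; rfl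
  rw [h4, Finset.map_univ_equiv]

lemma symList_eq_sort (l : List ι) :
    SymList b l = SymList b ((↑l : Multiset ι).sort (· ≤ ·)) := by
  set τ := Tuple.sort (fun i => l.get i) with hτ
  have h1 : SymList b l = symU (K := K) (g := g) l.length (fun i => b (l.get (τ i))) :=
    (symU_perm _ _ τ).symm
  have h2 : List.ofFn (fun i => l.get (τ i)) = (↑l : Multiset ι).sort (· ≤ ·) := by
    have hperm : (List.ofFn (fun i => l.get (τ i))).Perm ((↑l : Multiset ι).sort (· ≤ ·)) := by
      rw [← Multiset.coe_eq_coe, mult_ofFn_perm (fun i => l.get i) τ, List.ofFn_get,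
        Multiset.sort_eq]
    have hs1 : (List.ofFn (fun i => l.get (τ i))).SortedLE := by
      rw [List.sortedLE_ofFn_iff]; exact Tuple.monotone_sort _
    exact List.Perm.eq_of_sortedLE hs1 (Multiset.pairwise_sort _ _).sortedLE hperm
  rw [h1, symU_to_symList, h2]

/-- The symmetrized monomial attached to a multiset of indices. -/
def symOf (μ : Multiset ι) : Ug := SymList b (μ.sort (· ≤ ·))

lemma symU_basis_eq_symOf (n : ℕ) (v : Fin n → ι) :
    symU (K := K) (g := g) n (fun i => b (v i)) = symOf b ↑(List.ofFn v) := by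
  rw [symU_to_symList, symOf, symList_eq_sort]

lemma W_ofFn (n : ℕ) (w : Fin n → ι) :
    W b (List.ofFn w) = (List.ofFn fun i => ιU (b (w i))).prod := by
  rw [W, List.map_ofFn]; rfl

lemma symList_apply_W (l : List ι) :
    SymList b l = (l.length.factorial : K)⁻¹ •
      ∑ σ : Equiv.Perm (Fin l.length), W b (List.ofFn (fun i => l.get (σ i))) := by
  rw [SymList, symU_apply]
  congr 1
  apply Finset.sum_congr rfl
  intro σ _
  rw [W_ofFn]

lemma symOf_zero : symOf b (0 : Multiset ι) = 1 := by
  rw [symOf, Multiset.sort_zero, SymList, symU_apply]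
  simp

end PBW
noncomputable section
namespace PBW
attribute [local instance] LieRing.ofAssociativeRing
set_option linter.unusedSectionVars false
set_option maxHeartbeats 1000000

open Finsupp

variable {K : Type*} [Field K] [CharZero K] {g : Type*} [LieRing g] [LieAlgebra K g]
variable {ι : Type*} [Fintype ι] [LinearOrder ι]
variable (b : Module.Basis ι K g)

local notation "Ug" => UniversalEnvelopingAlgebra K g
local notation "ιU" => UniversalEnvelopingAlgebra.ι K

lemma factorial_cast_ne_zero (n : ℕ) : (n.factorial : K) ≠ 0 :=
  Nat.cast_ne_zero.2 n.factorial_ne_zero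

/-- straightening: a word differs from the symmetrization of its multiset by
shorter words. -/
lemma W_sub_symOf (l : List ι) (n : ℕ) (hl : l.length = n + 1) :
    W b l - symOf b ↑l ∈ Fspan b n := by
  have hsym : symOf b ↑l = SymList b l := (symList_eq_sort b l).symm
  rw [hsym, symList_apply_W]
  have hterm : ∀ σ : Equiv.Perm (Fin l.length),
      W b (List.ofFn (fun i => l.get (σ i))) - W b l ∈ Fspan b n := by
    intro σ
    apply W_perm
    · rw [← Multiset.coe_eq_coe, mult_ofFn_perm (fun i => l.get i) σ, List.ofFn_get]
    · rw [List.length_ofFn]; exact hl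
  have hsum : ∑ σ : Equiv.Perm (Fin l.length), W b (List.ofFn (fun i => l.get (σ i)))
      = (l.length.factorial : K) • W b l +
        ∑ σ : Equiv.Perm (Fin l.length),
          (W b (List.ofFn (fun i => l.get (σ i))) - W b l) := by
    rw [Finset.sum_sub_distrib]
    have hcard : ∑ _σ : Equiv.Perm (Fin l.length), W b l
        = (l.length.factorial : K) • W b l := by
      rw [Finset.sum_const, Finset.card_univ, Fintype.card_perm, Fintype.card_fin]
      rw [← Nat.cast_smul_eq_nsmul K]
    rw [hcard]; abel
  rw [hsum, smul_add, smul_smul, inv_mul_cancel₀ (factorial_cast_ne_zero _), one_smul]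
  have heq : W b l - (W b l + (l.length.factorial : K)⁻¹ •
      (∑ σ : Equiv.Perm (Fin l.length), (W b (List.ofFn (fun i => l.get (σ i))) - W b l)))
      = -((l.length.factorial : K)⁻¹ •
      (∑ σ : Equiv.Perm (Fin l.length), (W b (List.ofFn (fun i => l.get (σ i))) - W b l))) := by
    abel
  rw [heq]
  exact Submodule.neg_mem _ (Submodule.smul_mem _ _ (Submodule.sum_mem _ (fun σ _ => hterm σ)))

lemma W_mem_span_symOf : ∀ (n : ℕ) (l : List ι), l.length ≤ n →
    W b l ∈ Submodule.span K (Set.range (symOf b)) := by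
  intro n
  induction n with
  | zero =>
    intro l hl
    rw [List.length_eq_zero_iff.1 (Nat.le_zero.1 hl)]
    have : W b ([] : List ι) = symOf b 0 := by rw [W_nil, symOf_zero]
    rw [this]
    exact Submodule.subset_span ⟨0, rfl⟩
  | succ n ih =>
    intro l hl
    rcases Nat.lt_or_ge l.length (n+1) with h|h
    · exact ih l (Nat.lt_succ_iff.1 h)
    have hlen : l.length = n + 1 := le_antisymm hl h
    have h1 := W_sub_symOf b l n hlen
    have h2 : Fspan b n ≤ Submodule.span K (Set.range (symOf b)) := by
      apply Submodule.span_le.2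
      rintro _ ⟨t, ht, rfl⟩
      exact ih t ht
    have h3 : W b l = (W b l - symOf b ↑l) + symOf b ↑l := by abel
    rw [h3]
    exact Submodule.add_mem _ (h2 h1) (Submodule.subset_span ⟨_, rfl⟩)

lemma span_symOf_top : Submodule.span K (Set.range (symOf b)) = ⊤ := by
  rw [eq_top_iff, ← span_W_top b]
  apply Submodule.span_le.2
  rintro _ ⟨l, rfl⟩
  exact W_mem_span_symOf b l.length l le_rfl

lemma ev_symList_sub (l : List ι) :
    ev b (SymList b l) - z ↑l ∈ Plt K ι l.length := by
  rw [symList_apply_W, map_smul, map_sum]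
  have hterm : ∀ σ : Equiv.Perm (Fin l.length),
      ev b (W b (List.ofFn (fun i => l.get (σ i)))) - z ↑l ∈ Plt K ι l.length := by
    intro σ
    have h1 := ev_W_sub_mem b (List.ofFn (fun i => l.get (σ i)))
    rw [List.length_ofFn, mult_ofFn_perm (fun i => l.get i) σ, List.ofFn_get] at h1
    exact h1
  have hsum : ∑ σ : Equiv.Perm (Fin l.length), ev b (W b (List.ofFn (fun i => l.get (σ i))))
      = (l.length.factorial : K) • z ↑l +
        ∑ σ : Equiv.Perm (Fin l.length),
          (ev b (W b (List.ofFn (fun i => l.get (σ i)))) - z ↑l) := by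
    rw [Finset.sum_sub_distrib, Finset.sum_const, Finset.card_univ, Fintype.card_perm,
      Fintype.card_fin, ← Nat.cast_smul_eq_nsmul K]
    abel
  rw [hsum, smul_add, smul_smul, inv_mul_cancel₀ (factorial_cast_ne_zero _), one_smul]
  have heq : z ↑l + (l.length.factorial : K)⁻¹ •
      (∑ σ : Equiv.Perm (Fin l.length),
        (ev b (W b (List.ofFn (fun i => l.get (σ i)))) - z ↑l)) - z (↑l : Multiset ι)
      = (l.length.factorial : K)⁻¹ •
      (∑ σ : Equiv.Perm (Fin l.length),
        (ev b (W b (List.ofFn (fun i => l.get (σ i)))) - z ↑l)) := by abel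
  rw [heq]
  exact Submodule.smul_mem _ _ (Submodule.sum_mem _ (fun σ _ => hterm σ))

lemma ev_symOf_sub (μ : Multiset ι) :
    ev b (symOf b μ) - z μ ∈ Plt K ι (Multiset.card μ) := by
  have h := ev_symList_sub b (μ.sort (· ≤ ·))
  rw [Multiset.sort_eq, Multiset.length_sort] at h
  exact h

lemma li_symOf : LinearIndependent K (symOf b) := by
  apply LinearIndependent.of_comp (ev b)
  rw [linearIndependent_iff]
  intro c hc
  by_contra hne
  set N := c.support.sup Multiset.card with hN
  have hE : c.sum (fun μ a => a • (ev b (symOf b μ) - z μ)) ∈ Plt K ι N := by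
    apply Submodule.sum_mem
    intro μ hμ
    apply Submodule.smul_mem
    exact Plt_mono (Finset.le_sup (f := Multiset.card) hμ) (ev_symOf_sub b μ)
  have hzero : c + c.sum (fun μ a => a • (ev b (symOf b μ) - z μ)) = 0 := by
    rw [← hc, Finsupp.linearCombination_apply]
    have hsplit : c.sum (fun μ a => a • (ev b ∘ symOf b) μ)
        = c.sum (fun μ a => a • z μ) + c.sum (fun μ a => a • (ev b (symOf b μ) - z μ)) := by
      rw [← Finsupp.sum_add]
      apply Finsupp.sum_congr
      intro μ _
      simp only [Function.comp_apply]
      rw [← smul_add]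
      congr 1
      abel
    rw [hsplit]
    congr 1
    have h1 : c.sum (fun μ a => a • z μ) = c.sum (fun μ a => Finsupp.single μ a) := by
      apply Finsupp.sum_congr
      intro μ _
      rw [z, Finsupp.smul_single, smul_eq_mul, mul_one]
    rw [h1, Finsupp.sum_single c]
  have hmem : c ∈ Plt K ι N := by
    have h2 : c = -(c.sum (fun μ a => a • (ev b (symOf b μ) - z μ))) := by
      have := hzero
      rw [add_eq_zero_iff_eq_neg] at this
      exact this
    rw [h2]
    exact Submodule.neg_mem _ hE
  obtain ⟨μ₀, hμ₀, hcard⟩ := Finset.exists_mem_eq_sup c.support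
    (Finsupp.support_nonempty_iff.2 hne) Multiset.card
  have hlt : Multiset.card μ₀ < N := (Finsupp.mem_supported K c).1 hmem hμ₀
  omega

/-- The PBW basis of symmetrized monomials for `Ug`. -/
def BU : Module.Basis (Multiset ι) K Ug :=
  Module.Basis.mk (li_symOf b) (by rw [span_symOf_top b])

lemma BU_apply (μ : Multiset ι) : BU b μ = symOf b μ := Module.Basis.mk_apply _ _ _

end PBW
noncomputable section
namespace PBW
attribute [local instance] LieRing.ofAssociativeRing
set_option linter.unusedSectionVars false
set_option maxHeartbeats 1000000

open Finsupp

variable {K : Type*} [Field K] [CharZero K] {g : Type*} [LieRing g] [LieAlgebra K g]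
variable {ι : Type*} [Fintype ι] [LinearOrder ι]
variable (b : Module.Basis ι K g)

local notation "Ug" => UniversalEnvelopingAlgebra K g
local notation "ιU" => UniversalEnvelopingAlgebra.ι K

lemma sg_mul_comm (u v : SgAlg K g) : u * v = v * u := by
  obtain ⟨a, rfl⟩ := RingQuot.mkAlgHom_surjective K (symRel K g) u
  obtain ⟨c, rfl⟩ := RingQuot.mkAlgHom_surjective K (symRel K g) v
  set π := RingQuot.mkAlgHom K (symRel K g)
  have base : ∀ x y : g, Commute (π (TensorAlgebra.ι K x)) (π (TensorAlgebra.ι K y)) := by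
    intro x y
    have h : π (TensorAlgebra.ι K x * TensorAlgebra.ι K y)
        = π (TensorAlgebra.ι K y * TensorAlgebra.ι K x) :=
      RingQuot.mkAlgHom_rel K ⟨x, y, rfl, rfl⟩
    rw [map_mul, map_mul] at h
    exact h
  have step1 : ∀ (y : g) (a : TensorAlgebra K g),
      Commute (π a) (π (TensorAlgebra.ι K y)) := by
    intro y a
    induction a using TensorAlgebra.induction with
    | algebraMap r => rw [AlgHom.commutes]; exact Algebra.commute_algebraMap_left r _
    | ι x => exact base x y
    | mul a c ha hc => rw [map_mul]; exact ha.mul_left hc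
    | add a c ha hc => rw [map_add]; exact ha.add_left hc
  have step2 : ∀ a c : TensorAlgebra K g, Commute (π a) (π c) := by
    intro a c
    induction c using TensorAlgebra.induction with
    | algebraMap r => rw [AlgHom.commutes]; exact (Algebra.commute_algebraMap_left r _).symm
    | ι x => exact step1 x a
    | mul c d hc hd => rw [map_mul]; exact hc.mul_right hd
    | add c d hc hd => rw [map_add]; exact hc.add_right hd
  exact step2 a c

@[reducible] def sgCommRing : CommRing (SgAlg K g) :=
  { (inferInstance : Ring (SgAlg K g)) with mul_comm := sg_mul_comm }

/-- The linear map sending `x` to its coordinate expansion in the `X k`. -/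
def toPoly : g →ₗ[K] MvPolynomial ι K :=
  (Finsupp.linearCombination K (fun k : ι => (MvPolynomial.X k : MvPolynomial ι K))).comp
    b.repr.toLinearMap

lemma toPoly_apply (x : g) :
    toPoly b x = (b.repr x).sum fun k c => c • MvPolynomial.X k := by
  rw [toPoly, LinearMap.comp_apply, Finsupp.linearCombination_apply]; rfl

lemma toPoly_basis (k : ι) : toPoly b (b k) = MvPolynomial.X k := by
  rw [toPoly_apply, b.repr_self, Finsupp.sum_single_index] <;> simp

/-- The algebra morphism `Sg → K[X]`. -/
def eHom : SgAlg K g →ₐ[K] MvPolynomial ι K :=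
  RingQuot.liftAlgHom K ⟨TensorAlgebra.lift K (toPoly b), by
    rintro x y ⟨v, w, rfl, rfl⟩
    rw [map_mul, map_mul, TensorAlgebra.lift_ι_apply, TensorAlgebra.lift_ι_apply, mul_comm]⟩

lemma eHom_mk (a : TensorAlgebra K g) :
    eHom b (RingQuot.mkAlgHom K (symRel K g) a) = TensorAlgebra.lift K (toPoly b) a := by
  rw [eHom, RingQuot.liftAlgHom_mkAlgHom_apply]

lemma eHom_symIota (x : g) : eHom b (symIota K g x) = toPoly b x := by
  have h : symIota K g x = RingQuot.mkAlgHom K (symRel K g) (TensorAlgebra.ι K x) := rfl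
  rw [h, eHom_mk, TensorAlgebra.lift_ι_apply]

lemma eHom_bijective : Function.Bijective (eHom b) := by
  letI : CommRing (SgAlg K g) := sgCommRing
  set ψ : MvPolynomial ι K →ₐ[K] SgAlg K g :=
    MvPolynomial.aeval (fun k => symIota K g (b k)) with hψ
  have hψX : ∀ k : ι, ψ (MvPolynomial.X k) = symIota K g (b k) := by
    intro k; rw [hψ, MvPolynomial.aeval_X]
  have hψe : ∀ u : SgAlg K g, ψ (eHom b u) = u := by
    have key : (ψ.comp (eHom b)).comp (RingQuot.mkAlgHom K (symRel K g))
        = RingQuot.mkAlgHom K (symRel K g) := by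
      apply TensorAlgebra.hom_ext
      apply LinearMap.ext
      intro x
      simp only [LinearMap.comp_apply, AlgHom.toLinearMap_apply, AlgHom.comp_apply]
      have h1 : eHom b (RingQuot.mkAlgHom K (symRel K g) (TensorAlgebra.ι K x))
          = toPoly b x := eHom_symIota b x
      rw [h1, toPoly_apply, map_finsuppSum]
      have h2 : ∀ (k : ι) (c : K), ψ (c • MvPolynomial.X k) = c • symIota K g (b k) := by
        intro k c; rw [map_smul, hψX]
      simp only [h2]
      have h3 : ((b.repr x).sum fun k c => c • symIota K g (b k)) = symIota K g x := by
        have h4 : x = (b.repr x).sum fun k c => c • b k := by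
          conv_lhs => rw [← b.linearCombination_repr x]
          rw [Finsupp.linearCombination_apply]
        conv_rhs => rw [h4]
        rw [map_finsuppSum]
        simp only [map_smul]
      rw [h3]; rfl
    intro u
    obtain ⟨a, rfl⟩ := RingQuot.mkAlgHom_surjective K (symRel K g) u
    exact DFunLike.congr_fun key a
  have heψ : ∀ p : MvPolynomial ι K, eHom b (ψ p) = p := by
    have key : (eHom b).comp ψ = AlgHom.id K (MvPolynomial ι K) := by
      apply MvPolynomial.algHom_ext
      intro k
      simp only [AlgHom.comp_apply, AlgHom.id_apply, hψX, eHom_symIota, toPoly_basis]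
    intro p
    exact DFunLike.congr_fun key p
  constructor
  · intro u v huv
    rw [← hψe u, ← hψe v, huv]
  · intro p
    exact ⟨ψ p, heψ p⟩

/-- Monomial basis of the polynomial algebra indexed by multisets. -/
def BM : Module.Basis (Multiset ι) K (MvPolynomial ι K) :=
  (MvPolynomial.basisMonomials ι K).reindex (Multiset.toFinsupp.symm.toEquiv)

lemma BM_apply (μ : Multiset ι) :
    BM (K := K) (ι := ι) μ = MvPolynomial.monomial (Multiset.toFinsupp μ) 1 := by
  rw [BM, Module.Basis.reindex_apply]
  have h : (Multiset.toFinsupp.symm.toEquiv.symm μ : ι →₀ ℕ) = Multiset.toFinsupp μ := rfl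
  rw [h]
  have h2 := MvPolynomial.coe_basisMonomials ι K
  exact congrFun h2 _

lemma coe_ofFn_eq_sum {α : Type*} : ∀ (n : ℕ) (f : Fin n → α),
    (↑(List.ofFn f) : Multiset α) = ∑ i : Fin n, ({f i} : Multiset α) := by
  intro n
  induction n with
  | zero => intro f; simp
  | succ n ih =>
    intro f
    rw [List.ofFn_succ, Fin.sum_univ_succ, ← ih (fun i => f i.succ)]
    rfl

lemma prod_monomial (n : ℕ) (d : Fin n → (ι →₀ ℕ)) :
    (∏ i : Fin n, (MvPolynomial.monomial (d i) (1 : K))) =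
      MvPolynomial.monomial (∑ i, d i) 1 := by
  induction n with
  | zero => simp
  | succ n ih =>
    rw [Fin.prod_univ_succ, Fin.sum_univ_succ, ih (fun i => d i.succ),
      MvPolynomial.monomial_mul, one_mul]

lemma prod_X_eq_BM (n : ℕ) (f : Fin n → ι) :
    (List.ofFn fun i => (MvPolynomial.X (f i) : MvPolynomial ι K)).prod =
      BM (K := K) (ι := ι) (↑(List.ofFn f)) := by
  rw [List.prod_ofFn, BM_apply]
  have h1 : ∀ i, (MvPolynomial.X (f i) : MvPolynomial ι K)
      = MvPolynomial.monomial (Finsupp.single (f i) 1) 1 := by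
    intro i; rw [MvPolynomial.X, MvPolynomial.monomial]
  simp only [h1]
  rw [prod_monomial]
  congr 1
  have h2 : Multiset.toFinsupp (↑(List.ofFn f) : Multiset ι)
      = ∑ i, Finsupp.single (f i) 1 := by
    rw [coe_ofFn_eq_sum, map_sum]
    exact Finset.sum_congr rfl (fun i _ => Multiset.toFinsupp_singleton _)
  rw [h2]

end PBW
noncomputable section
namespace PBW
attribute [local instance] LieRing.ofAssociativeRing
set_option linter.unusedSectionVars false
set_option maxHeartbeats 1000000

open Finsupp

variable {K : Type*} [Field K] [CharZero K] {g : Type*} [LieRing g] [LieAlgebra K g]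
variable {ι : Type*} [Fintype ι] [LinearOrder ι]
variable (b : Module.Basis ι K g)

local notation "Ug" => UniversalEnvelopingAlgebra K g

def omega0 : MvPolynomial ι K →ₗ[K] Ug :=
  ((BM (K := K) (ι := ι)).equiv (BU b) (Equiv.refl _)).toLinearMap

lemma omega0_BM (μ : Multiset ι) :
    omega0 b (BM (K := K) (ι := ι) μ) = symOf b μ := by
  rw [omega0, LinearEquiv.coe_toLinearMap, Module.Basis.equiv_apply, Equiv.refl_apply, BU_apply]

/-- The symmetrization map. -/
def omegaMap : SgAlg K g →ₗ[K] Ug := (omega0 b).comp (eHom b).toLinearMap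

lemma omegaMap_bijective : Function.Bijective (omegaMap b) := by
  have h : ⇑(omegaMap b) =
      ⇑((BM (K := K) (ι := ι)).equiv (BU b) (Equiv.refl _)) ∘ ⇑(eHom b) := rfl
  rw [h]
  exact Function.Bijective.comp
    ((BM (K := K) (ι := ι)).equiv (BU b) (Equiv.refl _)).bijective (eHom_bijective b)

theorem omegaMap_formula (n : ℕ) (x : Fin n → g) :
    omegaMap b ((List.ofFn fun i => symIota K g (x i)).prod)
      = symU (K := K) (g := g) n x := by
  have h1 : eHom b ((List.ofFn fun i => symIota K g (x i)).prod)
      = (List.ofFn fun i => toPoly b (x i)).prod := by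
    rw [map_list_prod, List.map_ofFn]
    have h : (⇑(eHom b) ∘ fun i => symIota K g (x i)) = fun i => toPoly b (x i) := by
      funext i
      simp only [Function.comp_apply, eHom_symIota]
    rw [h]
  set PM := MultilinearMap.mkPiAlgebraFin K n (MvPolynomial ι K) with hPM
  have h2 : (List.ofFn fun i => toPoly b (x i)).prod = PM (fun i => toPoly b (x i)) :=
    (MultilinearMap.mkPiAlgebraFin_apply _).symm
  have h3 : (fun i => toPoly b (x i)) =
      fun i => ∑ k : ι, b.repr (x i) k • MvPolynomial.X k := by
    funext i
    rw [toPoly_apply, Finsupp.sum_fintype]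
    intro k
    rw [zero_smul]
  have h4 : PM (fun i => toPoly b (x i)) = ∑ f : Fin n → ι,
      (∏ i, b.repr (x i) (f i)) • PM (fun i => MvPolynomial.X (f i)) := by
    conv_lhs => rw [h3]
    rw [MultilinearMap.map_sum]
    exact Finset.sum_congr rfl (fun f _ => MultilinearMap.map_smul_univ _ _ _)
  have h5 : ∀ f : Fin n → ι, PM (fun i => MvPolynomial.X (f i))
      = BM (K := K) (ι := ι) (↑(List.ofFn f)) := by
    intro f
    rw [hPM, MultilinearMap.mkPiAlgebraFin_apply]
    exact prod_X_eq_BM n f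
  rw [omegaMap, LinearMap.comp_apply, AlgHom.toLinearMap_apply, h1, h2, h4, map_sum,
    symU_expand b n x]
  apply Finset.sum_congr rfl
  intro f _
  rw [map_smul, h5 f, omega0_BM, symU_basis_eq_symOf]

end PBW
/-- The symmetrization map `ω : Sg → Ug`, `ω(x₁⋯xₙ) = (1/n!) Σ_{σ∈Sₙ} x_{σ(1)}⋯x_{σ(n)}`,
is a `K`-linear bijection. -/
theorem symmetrization_bijective (K : Type*) [Field K] [CharZero K]
    (g : Type*) [LieRing g] [LieAlgebra K g] [FiniteDimensional K g] :
    ∃ ω : SgAlg K g →ₗ[K] UniversalEnvelopingAlgebra K g,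
      (∀ (n : ℕ) (x : Fin n → g),
        ω (List.ofFn fun i => symIota K g (x i)).prod
          = (n.factorial : K)⁻¹ •
            ∑ σ : Equiv.Perm (Fin n),
              (List.ofFn fun i => UniversalEnvelopingAlgebra.ι K (x (σ i))).prod) ∧
      Function.Bijective ω := by
  let b : Module.Basis (Fin (Module.finrank K g)) K g := Module.finBasis K g
  refine ⟨PBW.omegaMap b, ?_, PBW.omegaMap_bijective b⟩
  intro n x
  rw [PBW.omegaMap_formula b n x, PBW.symU_apply]
end
end
end
end
end
end
end
end
end
end
end

section
/- Let g = sl(2,ℂ) ⋉ n₃ as above, and let Sg be its symmetric algebra with the adjoint action extended by derivations. The subspace F = { g₃ ∈ S²g : [q,g₃] = 0 and [p,g₃] = 0 } of quadratic elements annihilated by the actions of q and p is exactly the 4-dimensional span of z², q² − 2ez, pq + hz, and p² + 2fz. -/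
open MvPolynomial

noncomputable section

-- The symmetric algebra of `g = sl(2,ℂ) ⋉ n₃` is `ℂ[h,e,f,q,p,z]`, with
-- variables indexed `0 = h, 1 = e, 2 = f, 3 = q, 4 = p, 5 = z`.

/-- The derivation `[q, ·]` of `Sg` extending `ad q`
(`h ↦ −q`, `f ↦ −p`, `p ↦ z`, others `↦ 0`). -/
def Dq (g : MvPolynomial (Fin 6) ℂ) : MvPolynomial (Fin 6) ℂ :=
  - (X 3 * pderiv 0 g) - X 4 * pderiv 2 g + X 5 * pderiv 4 g

/-- The derivation `[p, ·]` of `Sg` extending `ad p`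
(`h ↦ p`, `e ↦ −q`, `q ↦ −z`, others `↦ 0`). -/
def Dp (g : MvPolynomial (Fin 6) ℂ) : MvPolynomial (Fin 6) ℂ :=
  X 4 * pderiv 0 g - X 3 * pderiv 1 g - X 5 * pderiv 3 g

namespace SL2Aux

lemma single_add_tsub {i : Fin 6} {s : Fin 6 →₀ ℕ} (h : s i ≠ 0) :
    Finsupp.single i 1 + (s - Finsupp.single i 1) = s := by
  ext j
  by_cases hj : j = i
  · subst hj
    simp only [Finsupp.add_apply, Finsupp.tsub_apply, Finsupp.single_eq_same]
    omega
  · simp [Finsupp.single_apply, Ne.symm hj, hj, Finsupp.tsub_apply]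

lemma X_eq_monomial (i : Fin 6) :
    (X i : MvPolynomial (Fin 6) ℂ) = monomial (Finsupp.single i 1) 1 := rfl

lemma X_mul_pderiv_monomial (i : Fin 6) (s : Fin 6 →₀ ℕ) (a : ℂ) :
    X i * pderiv i (monomial s a) = monomial s ((s i : ℂ) * a) := by
  rw [pderiv_monomial]
  by_cases h : s i = 0
  · simp [h]
  · rw [X_eq_monomial, monomial_mul, one_mul, single_add_tsub h, mul_comm]

lemma degree_univ_sum (m : Fin 6 →₀ ℕ) : m.degree = ∑ i : Fin 6, m i :=
  Finset.sum_subset (Finset.subset_univ _)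
    (fun x _ hx => Finsupp.notMem_support_iff.mp hx)

lemma degree_of_mem_support {P : MvPolynomial (Fin 6) ℂ} {n : ℕ}
    (h : P.IsHomogeneous n) {m : Fin 6 →₀ ℕ} (hm : m ∈ P.support) :
    m.degree = n := by
  have := h (mem_support_iff.mp hm)
  rw [Finsupp.degree_eq_weight_one]; exact this

lemma euler {n : ℕ} {P : MvPolynomial (Fin 6) ℂ} (h : P.IsHomogeneous n) :
    (n : ℂ) • P = ∑ i : Fin 6, X i * pderiv i P := by
  conv_lhs => rw [P.as_sum]
  conv_rhs => rw [P.as_sum]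
  rw [Finset.smul_sum]
  simp_rw [map_sum, Finset.mul_sum, X_mul_pderiv_monomial]
  rw [Finset.sum_comm]
  refine Finset.sum_congr rfl fun m hm => ?_
  have hd : m.degree = n := degree_of_mem_support h hm
  rw [← map_sum (monomial m) (fun i => ((m i : ℂ) * coeff m P)) Finset.univ,
    ← Finset.sum_mul, smul_monomial]
  congr 1
  rw [← Nat.cast_sum, ← degree_univ_sum, hd]
  simp [smul_eq_mul]

lemma isHomogeneous_pderiv {n : ℕ} {P : MvPolynomial (Fin 6) ℂ}
    (h : P.IsHomogeneous (n + 1)) (i : Fin 6) :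
    (pderiv i P).IsHomogeneous n := by
  have hs := congrArg (pderiv i) P.as_sum
  rw [map_sum] at hs
  rw [hs]
  refine IsHomogeneous.sum _ _ _ fun m hm => ?_
  rw [pderiv_monomial]
  by_cases h0 : m i = 0
  · simp [h0, isHomogeneous_zero]
  · apply isHomogeneous_monomial
    have hd : m.degree = n + 1 := degree_of_mem_support h hm
    have h1 : (Finsupp.single i 1 + (m - Finsupp.single i 1)).degree = m.degree := by
      rw [single_add_tsub h0]
    rw [degree_univ_sum, degree_univ_sum] at h1
    rw [degree_univ_sum]
    have h2 : (∑ j : Fin 6, Finsupp.single i 1 j) = 1 := by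
      rw [← degree_univ_sum]
      simp [Finsupp.degree_single, Finsupp.support_single_ne_zero i one_ne_zero]
    simp only [Finsupp.coe_add, Pi.add_apply, Finset.sum_add_distrib, h2] at h1
    rw [degree_univ_sum] at hd
    omega

lemma eq_C_of_isHomogeneous_zero {P : MvPolynomial (Fin 6) ℂ}
    (h : P.IsHomogeneous 0) : P = C (coeff 0 P) := by
  ext d
  by_cases hd : d = 0
  · simp [hd]
  · rw [coeff_C, if_neg (Ne.symm hd), h.coeff_eq_zero]
    rw [Ne, Finsupp.degree_eq_zero_iff]
    exact hd

lemma pderiv_comm (i j : Fin 6) (P : MvPolynomial (Fin 6) ℂ) :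
    pderiv i (pderiv j P) = pderiv j (pderiv i P) := by
  by_cases hij : i = j
  · rw [hij]
  have key : ∀ (s : Fin 6 →₀ ℕ) (a : ℂ),
      pderiv i (pderiv j (monomial s a)) = pderiv j (pderiv i (monomial s a)) := by
    intro s a
    rw [pderiv_monomial, pderiv_monomial, pderiv_monomial, pderiv_monomial]
    have h1 : (s - Finsupp.single j 1 : Fin 6 →₀ ℕ) i = s i := by
      rw [Finsupp.tsub_apply, Finsupp.single_apply, if_neg (Ne.symm hij)]
      omega
    have h2 : (s - Finsupp.single i 1 : Fin 6 →₀ ℕ) j = s j := by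
      rw [Finsupp.tsub_apply, Finsupp.single_apply, if_neg hij]
      omega
    have h3 : s - Finsupp.single j 1 - Finsupp.single i 1
        = s - Finsupp.single i 1 - Finsupp.single j 1 := by
      ext k
      simp only [Finsupp.tsub_apply]
      omega
    rw [h1, h2, h3]
    congr 1
    ring
  conv_lhs => rw [P.as_sum]
  conv_rhs => rw [P.as_sum]
  rw [map_sum, map_sum, map_sum, map_sum]
  exact Finset.sum_congr rfl fun m _ => key m _

lemma pderiv_two (i : Fin 6) : pderiv i (2 : MvPolynomial (Fin 6) ℂ) = 0 := by
  rw [show (2 : MvPolynomial (Fin 6) ℂ) = C 2 from (map_ofNat _ _).symm]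
  exact pderiv_C

lemma cancel_two {x : MvPolynomial (Fin 6) ℂ}
    (h : (2 : MvPolynomial (Fin 6) ℂ) * x = 0) : x = 0 := by
  have h2 : (2 : MvPolynomial (Fin 6) ℂ) ≠ 0 := two_ne_zero
  exact (mul_eq_zero.mp h).resolve_left h2

lemma Dq_add (x y : MvPolynomial (Fin 6) ℂ) : Dq (x + y) = Dq x + Dq y := by
  simp only [Dq, map_add]
  ring

lemma Dp_add (x y : MvPolynomial (Fin 6) ℂ) : Dp (x + y) = Dp x + Dp y := by
  simp only [Dp, map_add]
  ring

lemma Dq_smul (c : ℂ) (x : MvPolynomial (Fin 6) ℂ) : Dq (c • x) = c • Dq x := by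
  simp only [Dq, smul_eq_C_mul, pderiv_C_mul]
  ring

lemma Dp_smul (c : ℂ) (x : MvPolynomial (Fin 6) ℂ) : Dp (c • x) = c • Dp x := by
  simp only [Dp, smul_eq_C_mul, pderiv_C_mul]
  ring

end SL2Aux

set_option maxHeartbeats 1000000 in
open SL2Aux in
/-- The subspace `F = { g₃ ∈ S²g : [q,g₃] = [p,g₃] = 0 }` of quadratic elements of
`Sg` killed by the actions of `q` and `p` is exactly the span of
`z²`, `q² − 2ez`, `pq + hz`, `p² + 2fz`. -/
theorem sl2_heisenberg_invariant_quadratics (g₃ : MvPolynomial (Fin 6) ℂ)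
    (hdeg : g₃.IsHomogeneous 2) :
    (Dq g₃ = 0 ∧ Dp g₃ = 0) ↔
      g₃ ∈ Submodule.span ℂ
        ({ X 5 ^ 2,
           X 3 ^ 2 - 2 * X 1 * X 5,
           X 4 * X 3 + X 0 * X 5,
           X 4 ^ 2 + 2 * X 2 * X 5 } : Set (MvPolynomial (Fin 6) ℂ)) := by
  constructor
  · rintro ⟨hq, hp⟩
    have h1 : ∀ i : Fin 6, (pderiv i g₃).IsHomogeneous 1 :=
      fun i => isHomogeneous_pderiv (n := 1) hdeg i
    have h0 : ∀ i j : Fin 6, (pderiv i (pderiv j g₃)).IsHomogeneous 0 :=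
      fun i j => isHomogeneous_pderiv (n := 0) (h1 j) i
    have hC : ∀ i j : Fin 6,
        pderiv i (pderiv j g₃) = C (coeff 0 (pderiv i (pderiv j g₃))) :=
      fun i j => eq_C_of_isHomogeneous_zero (h0 i j)
    have h3 : ∀ i j k : Fin 6, pderiv i (pderiv j (pderiv k g₃)) = 0 := by
      intro i j k
      rw [hC j k]
      exact pderiv_C
    have keyq : ∀ a b : Fin 6, pderiv a (pderiv b (Dq g₃)) = 0 := by
      intro a b; rw [hq]; simp
    have keyp : ∀ a b : Fin 6, pderiv a (pderiv b (Dp g₃)) = 0 := by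
      intro a b; rw [hp]; simp
    simp only [Dq] at keyq
    simp only [Dp] at keyp
    -- extract the linear relations among second derivatives
    have Z00 : pderiv 0 (pderiv 0 g₃) = 0 := by
      have R := keyq 0 3; simp [pderiv_mul, h3] at R; linear_combination R
    have Z10 : pderiv 1 (pderiv 0 g₃) = 0 := by
      have R := keyq 1 3; simp [pderiv_mul, h3] at R; linear_combination R
    have Z20 : pderiv 2 (pderiv 0 g₃) = 0 := by
      have R := keyq 2 3; simp [pderiv_mul, h3] at R; linear_combination R
    have Z30 : pderiv 3 (pderiv 0 g₃) = 0 := by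
      have R := keyq 3 3; simp [pderiv_mul, h3] at R; linear_combination R
    have Z40 : pderiv 4 (pderiv 0 g₃) = 0 := by
      have R := keyp 4 4; simp [pderiv_mul, h3] at R; linear_combination R
    have Z02 : pderiv 0 (pderiv 2 g₃) = 0 := by
      have R := keyq 0 4; simp [pderiv_mul, h3] at R; linear_combination R
    have Z12 : pderiv 1 (pderiv 2 g₃) = 0 := by
      have R := keyq 1 4; simp [pderiv_mul, h3] at R; linear_combination R
    have Z22 : pderiv 2 (pderiv 2 g₃) = 0 := by
      have R := keyq 2 4; simp [pderiv_mul, h3] at R; linear_combination R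
    have Z32 : pderiv 3 (pderiv 2 g₃) = 0 := by
      have R := keyq 3 4; simp [pderiv_mul, h3] at R; linear_combination -R - Z40
    have Z04 : pderiv 0 (pderiv 4 g₃) = 0 := by
      have R := keyq 0 5; simp [pderiv_mul, h3] at R; linear_combination R
    have Z14 : pderiv 1 (pderiv 4 g₃) = 0 := by
      have R := keyq 1 5; simp [pderiv_mul, h3] at R; linear_combination R
    have Z24 : pderiv 2 (pderiv 4 g₃) = 0 := by
      have R := keyq 2 5; simp [pderiv_mul, h3] at R; linear_combination R
    have Z54 : pderiv 5 (pderiv 4 g₃) = 0 := by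
      have R := keyq 5 5; simp [pderiv_mul, h3] at R; linear_combination R
    have N50 : pderiv 5 (pderiv 0 g₃) = pderiv 3 (pderiv 4 g₃) := by
      have R := keyq 3 5; simp [pderiv_mul, h3] at R; linear_combination -R
    have N52 : pderiv 5 (pderiv 2 g₃) = pderiv 4 (pderiv 4 g₃) := by
      have R := keyq 4 5; simp [pderiv_mul, h3] at R; linear_combination -R
    have Z01 : pderiv 0 (pderiv 1 g₃) = 0 := by
      have R := keyp 0 3; simp [pderiv_mul, h3] at R; linear_combination R
    have Z11 : pderiv 1 (pderiv 1 g₃) = 0 := by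
      have R := keyp 1 3; simp [pderiv_mul, h3] at R; linear_combination R
    have Z21 : pderiv 2 (pderiv 1 g₃) = 0 := by
      have R := keyp 2 3; simp [pderiv_mul, h3] at R; linear_combination R
    have Z31 : pderiv 3 (pderiv 1 g₃) = 0 := by
      have R := keyp 3 3; simp [pderiv_mul, h3] at R; linear_combination R
    have Z03 : pderiv 0 (pderiv 3 g₃) = 0 := by
      have R := keyp 0 5; simp [pderiv_mul, h3] at R; linear_combination R
    have Z13 : pderiv 1 (pderiv 3 g₃) = 0 := by
      have R := keyp 1 5; simp [pderiv_mul, h3] at R; linear_combination R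
    have Z23 : pderiv 2 (pderiv 3 g₃) = 0 := by
      have R := keyp 2 5; simp [pderiv_mul, h3] at R; linear_combination R
    have Z53 : pderiv 5 (pderiv 3 g₃) = 0 := by
      have R := keyp 5 5; simp [pderiv_mul, h3] at R; linear_combination R
    have N51 : pderiv 5 (pderiv 1 g₃) = - pderiv 3 (pderiv 3 g₃) := by
      have R := keyp 3 5; simp [pderiv_mul, h3] at R; linear_combination -R
    have N41 : pderiv 4 (pderiv 1 g₃) = 0 := by
      have R := keyp 3 4; simp [pderiv_mul, h3] at R; linear_combination Z30 - R
    have Z42 : pderiv 4 (pderiv 2 g₃) = 0 := (pderiv_comm 4 2 g₃).trans Z24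
    have P43 : pderiv 4 (pderiv 3 g₃) = pderiv 3 (pderiv 4 g₃) := pderiv_comm 4 3 g₃
    have Z35 : pderiv 3 (pderiv 5 g₃) = 0 := (pderiv_comm 3 5 g₃).trans Z53
    have Z45 : pderiv 4 (pderiv 5 g₃) = 0 := (pderiv_comm 4 5 g₃).trans Z54
    have N05 : pderiv 0 (pderiv 5 g₃) = pderiv 3 (pderiv 4 g₃) :=
      (pderiv_comm 0 5 g₃).trans N50
    have N15 : pderiv 1 (pderiv 5 g₃) = - pderiv 3 (pderiv 3 g₃) :=
      (pderiv_comm 1 5 g₃).trans N51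
    have N25 : pderiv 2 (pderiv 5 g₃) = pderiv 4 (pderiv 4 g₃) :=
      (pderiv_comm 2 5 g₃).trans N52
    -- Euler identities
    have e2 : (2 : ℂ) • g₃ = ∑ i : Fin 6, X i * pderiv i g₃ := by
      have h := euler hdeg
      simp only [Nat.cast_ofNat] at h
      exact h
    have e1 : ∀ i : Fin 6, pderiv i g₃ = ∑ j : Fin 6, X j * pderiv j (pderiv i g₃) := by
      intro i
      have h := euler (h1 i)
      simp only [Nat.cast_one, one_smul] at h
      exact h
    set α := coeff 0 (pderiv 5 (pderiv 5 g₃)) with hα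
    set β := coeff 0 (pderiv 3 (pderiv 3 g₃)) with hβ
    set γ := coeff 0 (pderiv 3 (pderiv 4 g₃)) with hγ
    set δ := coeff 0 (pderiv 4 (pderiv 4 g₃)) with hδ
    have big : (2 : ℂ) • g₃ =
        α • (X 5 ^ 2) + β • (X 3 ^ 2 - 2 * X 1 * X 5)
          + (2 * γ) • (X 4 * X 3 + X 0 * X 5) + δ • (X 4 ^ 2 + 2 * X 2 * X 5) := by
      rw [e2, Fin.sum_univ_six, e1 0, e1 1, e1 2, e1 3, e1 4, e1 5]
      simp only [Fin.sum_univ_six]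
      rw [Z00, Z10, Z20, Z30, Z40, N50,
        Z01, Z11, Z21, Z31, N41, N51,
        Z02, Z12, Z22, Z32, Z42, N52,
        Z03, Z13, Z23, P43, Z53,
        Z04, Z14, Z24, Z54,
        N05, N15, N25, Z35, Z45]
      rw [hC 3 3, hC 3 4, hC 4 4, hC 5 5, ← hα, ← hβ, ← hγ, ← hδ]
      simp only [smul_eq_C_mul, map_mul, map_neg, map_ofNat, map_sub, map_add]
      ring
    have hmem2 : (2 : ℂ) • g₃ ∈ Submodule.span ℂ
        ({ X 5 ^ 2, X 3 ^ 2 - 2 * X 1 * X 5, X 4 * X 3 + X 0 * X 5,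
           X 4 ^ 2 + 2 * X 2 * X 5 } : Set (MvPolynomial (Fin 6) ℂ)) := by
      rw [big]
      refine Submodule.add_mem _ (Submodule.add_mem _ (Submodule.add_mem _ ?_ ?_) ?_) ?_ <;>
        exact Submodule.smul_mem _ _ (Submodule.subset_span (by simp))
    have : g₃ = (2⁻¹ : ℂ) • ((2 : ℂ) • g₃) := by
      rw [smul_smul]
      norm_num
    rw [this]
    exact Submodule.smul_mem _ _ hmem2
  · intro hmem
    refine Submodule.span_induction (p := fun x _ => Dq x = 0 ∧ Dp x = 0) ?_ ?_ ?_ ?_ hmem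
    · intro x hx
      simp only [Set.mem_insert_iff, Set.mem_singleton_iff] at hx
      rcases hx with rfl | rfl | rfl | rfl <;>
        refine ⟨?_, ?_⟩ <;>
        · simp only [Dq, Dp]
          simp [pderiv_mul, pderiv_pow, pderiv_two, Pi.single_apply]
          try ring
    · constructor <;> simp [Dq, Dp]
    · rintro x y _ _ ⟨hx1, hx2⟩ ⟨hy1, hy2⟩
      exact ⟨by rw [Dq_add, hx1, hy1, add_zero], by rw [Dp_add, hx2, hy2, add_zero]⟩
    · rintro a x _ ⟨hx1, hx2⟩
      exact ⟨by rw [Dq_smul, hx1, smul_zero], by rw [Dp_smul, hx2, smul_zero]⟩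
end
end
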